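/- Let n ≥ 3 and let a₁,…,a_{n−2}, b₁,…,b_{n−2} be complex numbers; set c_i := a_i b_i for i = 1,…,n−2. For 1 ≤ i ≤ j ≤ n−2 define D(i,j) recursively by D(j,j) := 1 − c_j and D(i,j) := 1 − c_i / D(i+1,j) for i < j (i.e. D(i,j) is the continued fraction 1 − c_i/(1 − c_{i+1}/(⋯/(1 − c_j)))). Assume D(i,j) ≠ 0 for all 1 ≤ i ≤ j ≤ n−2. Then the only solution (z₁,…,z_{n−1}) ∈ ℂ^{n−1} of the system z₁² = b₁ z₁ z₂; z_k² = z_k(a_{k−1} z_{k−1} + b_k z_{k+1}) for 2 ≤ k ≤ n−2; z_{n−1}² = a_{n−2} z_{n−2} z_{n−1}, is the origin (0,…,0). -/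

import Mathlib

/-- The continued fraction `D(i,j) = 1 − c_i/(1 − c_{i+1}/(⋯/(1 − c_j)))`, defined
recursively by `D(j,j) = 1 − c_j` and `D(i,j) = 1 − c_i / D(i+1,j)` for `i < j`. -/
noncomputable def contFrac (c : ℕ → ℂ) (i j : ℕ) : ℂ :=
  if h : j ≤ i then 1 - c i else 1 - c i / contFrac c (i + 1) j
termination_by j - i
decreasing_by omega

lemma contFrac_same (c : ℕ → ℂ) (j : ℕ) : contFrac c j j = 1 - c j := by
  rw [contFrac]; simp

lemma contFrac_lt (c : ℕ → ℂ) {i j : ℕ} (h : i < j) :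
    contFrac c i j = 1 - c i / contFrac c (i+1) j := by
  rw [contFrac]; simp [Nat.not_le.mpr h]

/-- extend a nonzero entry to a maximal-to-the-right block of nonzero entries -/
lemma exists_right_block (z : ℕ → ℂ) (N : ℕ) :
    ∀ d m, N - m ≤ d → m ≤ N → z m ≠ 0 →
      ∃ j, m ≤ j ∧ j ≤ N ∧ (∀ l, m ≤ l → l ≤ j → z l ≠ 0) ∧ (j = N ∨ z (j+1) = 0) := by
  intro d
  induction d with
  | zero =>
    intro m hd hm hz
    refine ⟨m, le_rfl, hm, ?_, Or.inl (by omega)⟩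
    intro l h1 h2
    have : l = m := by omega
    rwa [this]
  | succ d ih =>
    intro m hd hm hz
    by_cases h1 : m = N
    · refine ⟨m, le_rfl, hm, ?_, Or.inl h1⟩
      intro l hl1 hl2
      have : l = m := by omega
      rwa [this]
    by_cases h2 : z (m+1) = 0
    · refine ⟨m, le_rfl, hm, ?_, Or.inr h2⟩
      intro l hl1 hl2
      have : l = m := by omega
      rwa [this]
    · obtain ⟨j, hj1, hj2, hj3, hj4⟩ := ih (m+1) (by omega) (by omega) h2
      refine ⟨j, by omega, hj2, ?_, hj4⟩
      intro l hl1 hl2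
      by_cases hl : l = m
      · rwa [hl]
      · exact hj3 l (by omega) hl2

/-- extend a nonzero entry to a maximal-to-the-left block of nonzero entries -/
lemma exists_left_block (z : ℕ → ℂ) :
    ∀ m, 1 ≤ m → z m ≠ 0 →
      ∃ i, 1 ≤ i ∧ i ≤ m ∧ (∀ l, i ≤ l → l ≤ m → z l ≠ 0) ∧ (i = 1 ∨ z (i-1) = 0) := by
  intro m
  induction m with
  | zero => intro h; omega
  | succ m ih =>
    intro hm hz
    by_cases h1 : m = 0
    · refine ⟨1, le_rfl, by omega, ?_, Or.inl rfl⟩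
      intro l hl1 hl2
      have : l = m + 1 := by omega
      rwa [this]
    by_cases h2 : z m = 0
    · refine ⟨m+1, by omega, le_rfl, ?_, Or.inr (by simpa using h2)⟩
      intro l hl1 hl2
      have : l = m + 1 := by omega
      rwa [this]
    · obtain ⟨i, hi1, hi2, hi3, hi4⟩ := ih (by omega) h2
      refine ⟨i, hi1, by omega, ?_, hi4⟩
      intro l hl1 hl2
      by_cases hl : l = m + 1
      · rwa [hl]
      · exact hi3 l hl1 (by omega)

/-- Let `n ≥ 3`, let `a₁,…,a_{n-2}, b₁,…,b_{n-2}` be complex numbers and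
`c_i = a_i b_i`.  If all the continued fractions `D(i,j)` for `1 ≤ i ≤ j ≤ n-2` are
nonzero, then the only solution `(z₁,…,z_{n-1})` of the system
`z₁² = b₁ z₁ z₂`, `z_k² = z_k (a_{k-1} z_{k-1} + b_k z_{k+1})` for `2 ≤ k ≤ n-2`,
`z_{n-1}² = a_{n-2} z_{n-2} z_{n-1}` is the origin. -/
theorem solutions_eq_zero_of_contFrac_ne_zero (n : ℕ) (hn : 3 ≤ n)
    (a b : ℕ → ℂ)
    (hD : ∀ i j, 1 ≤ i → i ≤ j → j ≤ n - 2 →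
      contFrac (fun i => a i * b i) i j ≠ 0)
    (z : ℕ → ℂ)
    (h1 : z 1 ^ 2 = b 1 * (z 1 * z 2))
    (hmid : ∀ k, 2 ≤ k → k ≤ n - 2 →
      z k ^ 2 = z k * (a (k - 1) * z (k - 1) + b k * z (k + 1)))
    (hlast : z (n - 1) ^ 2 = a (n - 2) * (z (n - 2) * z (n - 1))) :
    ∀ k, 1 ≤ k → k ≤ n - 1 → z k = 0 := by
  set c : ℕ → ℂ := fun i => a i * b i with hc
  intro m hm1 hm2
  by_contra hzm
  obtain ⟨j, hmj, hjn, hjne, hj4⟩ :=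
    exists_right_block z (n-1) (n-1-m) m le_rfl hm2 hzm
  obtain ⟨i, hi1, him, hine, hi4⟩ := exists_left_block z m hm1 hzm
  have hznz : ∀ l, i ≤ l → l ≤ j → z l ≠ 0 := by
    intro l hl1 hl2
    by_cases h : l ≤ m
    · exact hine l hl1 h
    · exact hjne l (by omega) hl2
  have cancel : ∀ k w, z k ≠ 0 → z k ^ 2 = z k * w → z k = w := by
    intro k w hk h
    have : z k * z k = z k * w := by rw [← sq]; exact h
    exact mul_left_cancel₀ hk this
  rcases eq_or_lt_of_le (le_trans him hmj) with heq | hij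
  · -- singleton block: i = j = m
    have hiem : i = m := by omega
    have hjem : j = m := by omega
    by_cases hme1 : m = 1
    · -- z 1 = b 1 * z 2 and z 2 = 0
      have hz2 : z 2 = 0 := by
        rcases hj4 with h' | h'
        · omega
        · have : j + 1 = 2 := by omega
          rwa [this] at h'
      apply hzm
      rw [hme1]
      have := cancel 1 (b 1 * z 2) (by rw [← hme1]; exact hzm) (by rw [h1]; ring)
      rw [this, hz2, mul_zero]
    · have hzim : z (m - 1) = 0 := by
        rcases hi4 with h' | h'
        · omega
        · rwa [hiem] at h'
      by_cases hmn : m = n - 1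
      · apply hzm
        have hzn2 : z (n - 2) = 0 := by
          have : n - 2 = m - 1 := by omega
          rw [this]; exact hzim
        have := cancel (n-1) (a (n-2) * z (n-2)) (by rw [← hmn]; exact hzm)
          (by rw [hlast]; ring)
        rw [← hmn] at this
        rw [this, hzn2, mul_zero]
      · -- interior singleton
        have hzjp : z (m + 1) = 0 := by
          rcases hj4 with h' | h'
          · omega
          · rwa [hjem] at h'
        apply hzm
        have := cancel m (a (m-1) * z (m-1) + b m * z (m+1)) hzm
          (hmid m (by omega) (by omega))
        rw [this, hzim, hzjp, mul_zero, mul_zero, add_zero]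
  · -- block of length ≥ 2 : i < j
    have hzi : z i ≠ 0 := hznz i le_rfl (by omega)
    have hzj : z j ≠ 0 := hznz j (by omega) le_rfl
    have hile : i ≤ n - 2 := by omega
    -- top equation: z i = b i * z (i+1)
    have htop : z i = b i * z (i + 1) := by
      by_cases hie : i = 1
      · rw [hie]
        have := cancel 1 (b 1 * z 2) (by rw [← hie]; exact hzi) (by rw [h1]; ring)
        simpa using this
      · have hzim : z (i - 1) = 0 := by
          rcases hi4 with h' | h'
          · omega
          · exact h'
        have := cancel i (a (i-1) * z (i-1) + b i * z (i+1)) hzi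
          (hmid i (by omega) hile)
        rw [this, hzim, mul_zero, zero_add]
    -- bottom equation: z j = a (j-1) * z (j-1)
    have hbot : z j = a (j - 1) * z (j - 1) := by
      by_cases hje : j = n - 1
      · have := cancel (n-1) (a (n-2) * z (n-2)) (by rw [← hje]; exact hzj)
          (by rw [hlast]; ring)
        rw [← hje] at this
        have e1 : n - 2 = j - 1 := by omega
        rwa [e1] at this
      · have hzjp : z (j + 1) = 0 := by
          rcases hj4 with h' | h'
          · omega
          · exact h'
        have := cancel j (a (j-1) * z (j-1) + b j * z (j+1)) hzj
          (hmid j (by omega) (by omega))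
        rw [this, hzjp, mul_zero, add_zero]
    rcases eq_or_lt_of_le (show i + 1 ≤ j from hij) with hj2 | hj3
    · -- j = i + 1
      have hji : j - 1 = i := by omega
      rw [hji] at hbot
      have hcon : (1 - c i) * z i = 0 := by
        have hii : z i = b i * (a i * z i) := by
          have e1 : i + 1 = j := by omega
          conv_lhs => rw [htop]
          rw [e1, hbot]
        simp only [hc]
        linear_combination hii
      have : contFrac c i i = 0 := by
        rw [contFrac_same]
        rcases mul_eq_zero.mp hcon with h | h
        · linear_combination h
        · exact absurd h hzi
      exact hD i i hi1 le_rfl hile this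
    · -- j ≥ i + 2
      -- key induction: a (k-1) * z (k-1) = contFrac c k (j-1) * z k for i+1 ≤ k ≤ j-1
      have key : ∀ t k, i + 1 ≤ k → k ≤ j - 1 → j - 1 - k ≤ t →
          a (k - 1) * z (k - 1) = contFrac c k (j - 1) * z k := by
        intro t
        induction t with
        | zero =>
          intro k hk1 hk2 hk3
          -- k = j - 1
          have hkj : k = j - 1 := by omega
          subst hkj
          rw [contFrac_same]
          have heq1 : z (j - 1) = a (j - 1 - 1) * z (j - 1 - 1) + b (j - 1) * z (j - 1 + 1) :=
            cancel _ _ (hznz (j-1) (by omega) (by omega)) (hmid (j-1) (by omega) (by omega))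
          have e1 : j - 1 + 1 = j := by omega
          rw [e1, hbot] at heq1
          simp only [hc]
          linear_combination -heq1
        | succ t ih =>
          intro k hk1 hk2 hk3
          by_cases hle : j - 1 - k ≤ t
          · exact ih k hk1 hk2 hle
          · -- k < j - 1
            have hklt : k < j - 1 := by omega
            have ihk : a k * z k = contFrac c (k+1) (j-1) * z (k+1) := by
              have := ih (k+1) (by omega) (by omega) (by omega)
              simpa using this
            have hDk : contFrac c (k+1) (j-1) ≠ 0 :=
              hD (k+1) (j-1) (by omega) (by omega) (by omega)
            have heq1 : z k = a (k - 1) * z (k - 1) + b k * z (k + 1) :=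
              cancel _ _ (hznz k (by omega) (by omega)) (hmid k (by omega) (by omega))
            rw [contFrac_lt c (show k < j - 1 by omega)]
            have hbk : b k * z (k + 1) = c k / contFrac c (k+1) (j-1) * z k := by
              rw [div_mul_eq_mul_div, eq_div_iff hDk]
              simp only [hc]
              linear_combination (-(b k)) * ihk
            linear_combination -heq1 - hbk
      have hu : a i * z i = contFrac c (i+1) (j-1) * z (i+1) := by
        have := key (j - 1 - (i+1)) (i+1) le_rfl (by omega) le_rfl
        simpa using this
      have hDip : contFrac c (i+1) (j-1) ≠ 0 :=
        hD (i+1) (j-1) (by omega) (by omega) (by omega)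
      have hci : contFrac c (i+1) (j-1) = c i := by
        have h2 : c i * z (i+1) = contFrac c (i+1) (j-1) * z (i+1) := by
          simp only [hc]
          calc a i * b i * z (i+1) = a i * (b i * z (i+1)) := by ring
          _ = a i * z i := by rw [← htop]
          _ = contFrac c (i+1) (j-1) * z (i+1) := hu
        exact (mul_right_cancel₀ (hznz (i+1) (by omega) (by omega)) h2.symm)
      have hcine : c i ≠ 0 := fun h => hDip (by rw [hci, h])
      have : contFrac c i (j-1) = 0 := by
        rw [contFrac_lt c (show i < j - 1 by omega), hci, div_self hcine, sub_self]
      exact hD i (j-1) hi1 (by omega) (by omega) this
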